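/- arXiv:1712.04896 — 2 statements merged into one kernel-verified Lean document; each statement's English description precedes it below -/
import Mathlib

section
/- Every vectorially ext. one convex function f : Λ^{k_1}(ℝⁿ) × … × Λ^{k_m}(ℝⁿ) → ℝ is locally Lipschitz. -/
open MeasureTheory Filter Topology
open scoped ENNReal

noncomputable section

/-- Euclidean `n`-space `ℝⁿ`. -/
abbrev Rn (n : ℕ) := EuclideanSpace ℝ (Fin n)

/-- Index type for the coordinates of `Λᵏ(ℝⁿ)` : `k`-element subsets of `{0,…,n-1}`. -/
abbrev IdxSet (n k : ℕ) := {s : Finset (Fin n) // s.card = k}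

/-- The space `Λᵏ(ℝⁿ)` of alternating `k`-linear maps on `ℝⁿ`, in coordinates. -/
abbrev Lam (n k : ℕ) := IdxSet n k → ℝ

/-- The euclidean scalar product `⟨·;·⟩` on `Λᵏ(ℝⁿ)`. -/
def dotL {n k : ℕ} (x y : Lam n k) : ℝ := ∑ S, x S * y S

/-- The euclidean norm `|·|` on `Λᵏ(ℝⁿ)`. -/
def nL {n k : ℕ} (x : Lam n k) : ℝ := Real.sqrt (∑ S, x S ^ 2)

/-- The sign of the shuffle putting `A ∪ B` in increasing order, `A` before `B`. -/
def interSign {n : ℕ} (A B : Finset (Fin n)) : ℝ :=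
  (-1 : ℝ) ^ ((A ×ˢ B).filter fun p => p.2 < p.1).card

/-- The wedge (exterior) product `Λᵏ × Λˡ → Λ^{k+l}`. -/
def wedge {n k l : ℕ} (ξ : Lam n k) (η : Lam n l) : Lam n (k + l) := fun S =>
  ∑ A ∈ S.1.powerset.attach,
    if hA : A.1.card = k then
      interSign A.1 (S.1 \ A.1) * ξ ⟨A.1, hA⟩ *
        η ⟨S.1 \ A.1, by
          rw [Finset.card_sdiff_of_subset (Finset.mem_powerset.mp A.2), S.2, hA]; omega⟩
    else 0

/-- Transport along an equality of degrees. -/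
def lamCast {n k l : ℕ} (h : k = l) (ξ : Lam n k) : Lam n l := fun S => ξ ⟨S.1, by rw [S.2, h]⟩

/-- The wedge power `ξ^a = ξ ∧ ⋯ ∧ ξ` (`a` times). -/
def wpow {n k : ℕ} (ξ : Lam n k) : (a : ℕ) → Lam n (k * a)
  | 0 => fun _ => 1
  | a + 1 => wedge (wpow ξ a) ξ

/-- The wedge product of a finite family of forms. -/
def wprod {n : ℕ} : {m : ℕ} → (d : Fin m → ℕ) → ((i : Fin m) → Lam n (d i)) → Lam n (∑ i, d i)
  | 0, _, _ => lamCast (by simp) ((fun _ => (1 : ℝ)) : Lam n 0)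
  | _ + 1, d, ξ =>
      lamCast (Fin.sum_univ_succ d).symm
        (wedge (ξ 0) (wprod (fun i => d i.succ) fun i => ξ i.succ))

/-- `ξ^α = ξ₁^{α₁} ∧ ⋯ ∧ ξ_m^{α_m}`. -/
def wpowProd {n m : ℕ} (k : Fin m → ℕ) (ξ : (i : Fin m) → Lam n (k i)) (α : Fin m → ℕ) :
    Lam n (∑ i, k i * α i) :=
  wprod (fun i => k i * α i) fun i => wpow (ξ i) (α i)

/-- sign of inserting `i` into `S`. -/
def epsSign {n : ℕ} (i : Fin n) (S : Finset (Fin n)) : ℝ :=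
  (-1 : ℝ) ^ (S.filter fun j => j < i).card

/-- `i`-th partial derivative of a scalar function on `ℝⁿ`. -/
def pd {n : ℕ} (i : Fin n) (ψ : Rn n → ℝ) (x : Rn n) : ℝ :=
  fderiv ℝ ψ x (EuclideanSpace.single i 1)

/-- Test functions for distributions on `Ω`: smooth, compactly supported in `Ω`. -/
def IsTest {n : ℕ} (Ω : Set (Rn n)) (ψ : Rn n → ℝ) : Prop :=
  ContDiff ℝ (⊤ : ℕ∞) ψ ∧ HasCompactSupport ψ ∧ tsupport ψ ⊆ Ω

/-- `v` is the distributional exterior derivative of the `(j-1)`-form field `ω` on `Ω`. -/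
def IsWED {n : ℕ} (Ω : Set (Rn n)) {j : ℕ} (ω : Rn n → Lam n (j - 1)) (v : Rn n → Lam n j) :
    Prop :=
  ∀ (S : IdxSet n j) (ψ : Rn n → ℝ), IsTest Ω ψ →
    ∫ x in Ω, v x S * ψ x =
      - ∑ i ∈ S.1.attach,
          epsSign i.1 S.1 *
            ∫ x in Ω,
              ω x ⟨S.1.erase i.1, by rw [Finset.card_erase_of_mem i.2, S.2]⟩ * pd i.1 ψ x

/-- `v = dω` weakly on `Ω` together with vanishing tangential trace `ν ∧ ω = 0` on `∂Ω`:
integration by parts holds with no boundary term against all smooth test functions (not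
necessarily compactly supported). -/
def IsWEDT {n : ℕ} (Ω : Set (Rn n)) {j : ℕ} (ω : Rn n → Lam n (j - 1)) (v : Rn n → Lam n j) :
    Prop :=
  ∀ (S : IdxSet n j) (ψ : Rn n → ℝ), ContDiff ℝ (⊤ : ℕ∞) ψ →
    ∫ x in Ω, v x S * ψ x =
      - ∑ i ∈ S.1.attach,
          epsSign i.1 S.1 *
            ∫ x in Ω,
              ω x ⟨S.1.erase i.1, by rw [Finset.card_erase_of_mem i.2, S.2]⟩ * pd i.1 ψ x

/-- The exterior derivative of a `(j-1)`-form field expressed through the (weak) partial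
derivatives `D` of its components. -/
def extDerivOf {n : ℕ} {j : ℕ} (D : Fin n → Rn n → Lam n (j - 1)) : Rn n → Lam n j :=
  fun x S =>
    ∑ i ∈ S.1.attach,
      epsSign i.1 S.1 * D i.1 x ⟨S.1.erase i.1, by rw [Finset.card_erase_of_mem i.2, S.2]⟩

/-- The (classical) exterior derivative of a smooth `(j-1)`-form field. -/
def smoothExtD {n : ℕ} {j : ℕ} (φ : Rn n → Lam n (j - 1)) : Rn n → Lam n j :=
  fun x S =>
    ∑ i ∈ S.1.attach,
      epsSign i.1 S.1 *
        fderiv ℝ (fun y => φ y ⟨S.1.erase i.1, by rw [Finset.card_erase_of_mem i.2, S.2]⟩) x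
          (EuclideanSpace.single i.1 1)

/-- `dω = 0` in the sense of distributions on `Ω`. -/
def WeakClosed {n : ℕ} {j : ℕ} (Ω : Set (Rn n)) (ω : Rn n → Lam n j) : Prop :=
  IsWED (j := j + 1) Ω ω fun _ => (0 : Lam n (j + 1))

/-- `δω = 0` in the sense of distributions on `Ω`:
`∫ ⟨ω, dφ⟩ = 0` for every smooth compactly supported `(j-1)`-form field `φ`. -/
def WeakCoclosed {n : ℕ} {j : ℕ} (Ω : Set (Rn n)) (ω : Rn n → Lam n j) : Prop :=
  ∀ φ : Rn n → Lam n (j - 1), ContDiff ℝ (⊤ : ℕ∞) φ → HasCompactSupport φ → tsupport φ ⊆ Ω →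
    ∫ x in Ω, dotL (ω x) (smoothExtD (j := j) φ x) = 0

/-- The conjugate Hölder exponent. -/
def conjExp (p : ℝ≥0∞) : ℝ≥0∞ :=
  if p = ∞ then 1 else if p = 1 then ∞ else ENNReal.ofReal (p.toReal / (p.toReal - 1))

/-- Weak convergence (weak-* if `p = ∞`) of a sequence in `L^p(Ω; Λᵏ)`:
the sequence and the limit belong to `L^p` and the integrals against every element of the
conjugate Lebesgue space converge. -/
def WeakLp {n j : ℕ} (Ω : Set (Rn n)) (p : ℝ≥0∞) (F : ℕ → Rn n → Lam n j)
    (f : Rn n → Lam n j) : Prop :=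
  (∀ ν, MemLp (F ν) p (volume.restrict Ω)) ∧ MemLp f p (volume.restrict Ω) ∧
    ∀ g : Rn n → Lam n j, MemLp g (conjExp p) (volume.restrict Ω) →
      Tendsto (fun ν => ∫ x in Ω, dotL (F ν x) (g x)) atTop
        (𝓝 (∫ x in Ω, dotL (f x) (g x)))

/-- `v` is the `i`-th weak partial derivative of `u` on `Ω`. -/
def IsWeakPartial {n : ℕ} {E : Type*} [NormedAddCommGroup E] [NormedSpace ℝ E]
    (Ω : Set (Rn n)) (i : Fin n) (u v : Rn n → E) : Prop :=
  ∀ ψ : Rn n → ℝ, IsTest Ω ψ → ∫ x in Ω, ψ x • v x = - ∫ x in Ω, pd i ψ x • u x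

/-- Membership in the Sobolev space `W^{1,p}(Ω; E)`, with weak partial derivatives `D`. -/
def MemW1p {n : ℕ} {E : Type*} [NormedAddCommGroup E] [NormedSpace ℝ E] (Ω : Set (Rn n))
    (p : ℝ≥0∞) (u : Rn n → E) (D : Fin n → Rn n → E) : Prop :=
  MemLp u p (volume.restrict Ω) ∧
    ∀ i, IsWeakPartial Ω i u (D i) ∧ MemLp (D i) p (volume.restrict Ω)

/-- Membership in `W₀^{1,p}(Ω; E)` (zero boundary values): the extension of `u` by zero
belongs to `W^{1,p}(ℝⁿ; E)`. -/
def MemW1p0 {n : ℕ} {E : Type*} [NormedAddCommGroup E] [NormedSpace ℝ E] (Ω : Set (Rn n))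
    (p : ℝ≥0∞) (u : Rn n → E) (D : Fin n → Rn n → E) : Prop :=
  MemW1p Ω p u D ∧ (∀ x ∉ Ω, u x = 0) ∧
    ∀ i, (∀ x ∉ Ω, D i x = 0) ∧ IsWeakPartial Set.univ i u (D i)

/-- A bounded open set with smooth boundary, via local smooth defining functions. -/
def IsSmoothDomain {n : ℕ} (Ω : Set (Rn n)) : Prop :=
  ∀ x ∈ frontier Ω, ∃ (U : Set (Rn n)) (ρ : Rn n → ℝ), IsOpen U ∧ x ∈ U ∧
    ContDiff ℝ (⊤ : ℕ∞) ρ ∧ (∀ y ∈ U, (y ∈ Ω ↔ ρ y < 0)) ∧ ∀ y ∈ U, fderiv ℝ ρ y ≠ 0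

/-- Vectorial ext. one convexity. -/
def VOneConvex {n m : ℕ} (k : Fin m → ℕ) (f : ((i : Fin m) → Lam n (k i + 1)) → ℝ) : Prop :=
  ∀ (ξ : (i : Fin m) → Lam n (k i + 1)) (a : Lam n 1) (b : (i : Fin m) → Lam n (k i)),
    ConvexOn ℝ Set.univ fun t : ℝ =>
      f fun i => ξ i + t • lamCast (Nat.add_comm 1 (k i)) (wedge a (b i))

/-- Vectorial ext. one affinity. -/
def VOneAffine {n m : ℕ} (k : Fin m → ℕ) (f : ((i : Fin m) → Lam n (k i + 1)) → ℝ) : Prop :=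
  ∀ (ξ : (i : Fin m) → Lam n (k i + 1)) (a : Lam n 1) (b : (i : Fin m) → Lam n (k i)),
    ∃ c d : ℝ, ∀ t : ℝ,
      f (fun i => ξ i + t • lamCast (Nat.add_comm 1 (k i)) (wedge a (b i))) = c + d * t

/-- Vectorial ext. quasiconvexity. -/
def VQuasiconvex {n m : ℕ} (k : Fin m → ℕ) (f : ((i : Fin m) → Lam n (k i + 1)) → ℝ) : Prop :=
  ∀ (Ω : Set (Rn n)), IsOpen Ω → Bornology.IsBounded Ω → Ω.Nonempty →
    ∀ (ξ : (i : Fin m) → Lam n (k i + 1)) (ω : (i : Fin m) → Rn n → Lam n (k i))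
      (v : (i : Fin m) → Rn n → Lam n (k i + 1)),
      (∀ i, ∃ C, LipschitzWith C (ω i)) → (∀ i, ∀ x ∉ Ω, ω i x = 0) →
      (∀ i, IsWED (j := k i + 1) Ω (ω i) (v i)) →
      (∀ i, MemLp (v i) ∞ (volume.restrict Ω)) →
      f ξ * (volume Ω).toReal ≤ ∫ x in Ω, f fun i => ξ i + v i x

/-- Vectorial ext. quasiaffinity. -/
def VQuasiaffine {n m : ℕ} (k : Fin m → ℕ) (f : ((i : Fin m) → Lam n (k i + 1)) → ℝ) : Prop :=
  ∀ (Ω : Set (Rn n)), IsOpen Ω → Bornology.IsBounded Ω → Ω.Nonempty →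
    ∀ (ξ : (i : Fin m) → Lam n (k i + 1)) (ω : (i : Fin m) → Rn n → Lam n (k i))
      (v : (i : Fin m) → Rn n → Lam n (k i + 1)),
      (∀ i, ∃ C, LipschitzWith C (ω i)) → (∀ i, ∀ x ∉ Ω, ω i x = 0) →
      (∀ i, IsWED (j := k i + 1) Ω (ω i) (v i)) →
      (∀ i, MemLp (v i) ∞ (volume.restrict Ω)) →
      (∫ x in Ω, f fun i => ξ i + v i x) = f ξ * (volume Ω).toReal

/-- Multiindices `α` with `1 ≤ |kα| ≤ n` (degrees of the nontrivial wedge powers). -/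
abbrev MIdx (n m : ℕ) (k : Fin m → ℕ) :=
  {α : Fin m → Fin (n + 1) //
    1 ≤ ∑ i, (k i + 1) * (α i : ℕ) ∧ ∑ i, (k i + 1) * (α i : ℕ) ≤ n}

/-- Multiindices `α` with `0 ≤ |kα| ≤ n`. -/
abbrev MIdx0 (n m : ℕ) (k : Fin m → ℕ) :=
  {α : Fin m → Fin (n + 1) // ∑ i, (k i + 1) * (α i : ℕ) ≤ n}

/-- The target space of the map `T`. -/
abbrev TSpace (n m : ℕ) (k : Fin m → ℕ) :=
  (α : MIdx n m k) → Lam n (∑ i, (k i + 1) * (α.1 i : ℕ))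

/-- `T(ξ)`, the vector of all nontrivial wedge powers of `ξ`. -/
def Tvec {n m : ℕ} (k : Fin m → ℕ) (ξ : (i : Fin m) → Lam n (k i + 1)) : TSpace n m k :=
  fun α => wpowProd (fun i => k i + 1) ξ fun i => (α.1 i : ℕ)

/-- Vectorial ext. polyconvexity. -/
def VPolyconvex {n m : ℕ} (k : Fin m → ℕ) (f : ((i : Fin m) → Lam n (k i + 1)) → ℝ) : Prop :=
  ∃ F : TSpace n m k → ℝ, ConvexOn ℝ Set.univ F ∧ ∀ ξ, f ξ = F (Tvec k ξ)

/-- Vectorial ext. polyaffinity. -/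
def VPolyaffine {n m : ℕ} (k : Fin m → ℕ) (f : ((i : Fin m) → Lam n (k i + 1)) → ℝ) : Prop :=
  ∃ (c : ℝ) (L : TSpace n m k →ₗ[ℝ] ℝ), ∀ ξ, f ξ = c + L (Tvec k ξ)

/-- Separate convexity: convexity in each scalar component. -/
def SepConvex {n m : ℕ} {d : Fin m → ℕ} (f : ((i : Fin m) → Lam n (d i)) → ℝ) : Prop :=
  ∀ (ξ : (i : Fin m) → Lam n (d i)) (i : Fin m) (S : IdxSet n (d i)),
    ConvexOn ℝ Set.univ fun t : ℝ => f (Function.update ξ i (Function.update (ξ i) S t))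

/-- Equiintegrability of a family of functions over `Ω`. -/
def EquiInt {n : ℕ} (Ω : Set (Rn n)) (F : ℕ → Rn n → ℝ) : Prop :=
  ∀ ε > (0 : ℝ), ∃ δ > (0 : ℝ), ∀ A : Set (Rn n), MeasurableSet A →
    volume A ≤ ENNReal.ofReal δ → ∀ s, ∫ x in A ∩ Ω, |F s x| ≤ ε

/-- Admissible lower growth function for exponent `p` (growth condition `(C_p)`). -/
def LowerCtrl {n j : ℕ} (p : ℝ≥0∞) (G : Lam n j → ℝ) : Prop :=
  (p = 1 ∧ ∃ a : ℝ, 0 ≤ a ∧ ∀ ξ, G ξ = a * nL ξ) ∨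
  (1 < p ∧ p ≠ ∞ ∧ ∃ a q : ℝ, 0 ≤ a ∧ 1 ≤ q ∧ q < p.toReal ∧ ∀ ξ, G ξ = a * nL ξ ^ q) ∨
  (p = ∞ ∧ ∃ η : ℝ → ℝ, (∀ t, 0 ≤ η t) ∧ Continuous η ∧ Monotone η ∧ ∀ ξ, G ξ = η (nL ξ))

/-- Admissible upper growth function for exponent `p` (growth condition `(C_p)`). -/
def UpperCtrl {n j : ℕ} (p : ℝ≥0∞) (G : Lam n j → ℝ) : Prop :=
  (p = 1 ∧ ∃ a : ℝ, 0 ≤ a ∧ ∀ ξ, G ξ = a * nL ξ) ∨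
  (1 < p ∧ p ≠ ∞ ∧ ∃ a : ℝ, 0 ≤ a ∧ ∀ ξ, G ξ = a * nL ξ ^ p.toReal) ∨
  (p = ∞ ∧ ∃ η : ℝ → ℝ, (∀ t, 0 ≤ η t) ∧ Continuous η ∧ Monotone η ∧ ∀ ξ, G ξ = η (nL ξ))

/-- The growth condition `(C_𝐩)`. -/
def GrowthCp {n m : ℕ} (k : Fin m → ℕ) (p : Fin m → ℝ≥0∞)
    (f : ((i : Fin m) → Lam n (k i + 1)) → ℝ) : Prop :=
  ∃ (a : ℝ) (Gl Gu : (i : Fin m) → Lam n (k i + 1) → ℝ), 0 < a ∧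
    (∀ i, LowerCtrl (p i) (Gl i)) ∧ (∀ i, UpperCtrl (p i) (Gu i)) ∧
    ∀ ξ, -(a * (1 + ∑ i, Gl i (ξ i))) ≤ f ξ ∧ f ξ ≤ a * (1 + ∑ i, Gu i (ξ i))



open Finset in
private lemma convexOn_shift {h : ℝ → ℝ} (hh : ConvexOn ℝ Set.univ h) (c : ℝ) :
    ConvexOn ℝ Set.univ fun t => h (t - c) := by
  refine ⟨convex_univ, fun x _ y _ a b ha hb hab => ?_⟩
  have key := hh.2 (Set.mem_univ (x - c)) (Set.mem_univ (y - c)) ha hb hab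
  simp only [smul_eq_mul] at key ⊢
  have e : a * x + b * y - c = a * (x - c) + b * (y - c) := by
    linear_combination c * hab
  rw [e]; exact key

private lemma sepConvex_locallyLipschitz {ι : Type*} [Fintype ι] [DecidableEq ι]
    (g : (ι → ℝ) → ℝ)
    (hg : ∀ (x : ι → ℝ) (j : ι), ConvexOn ℝ Set.univ fun t => g (Function.update x j t)) :
    LocallyLipschitz g := by
  classical
  intro x₀
  obtain ⟨M, hMdef⟩ : ∃ M : ℝ, M = Finset.univ.sup' Finset.univ_nonempty
      (fun ε : ι → Bool => g (fun j => x₀ j + if ε j then (2 : ℝ) else -2)) := ⟨_, rfl⟩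
  -- upper bound on the cube of radius 2
  have upper : ∀ y : ι → ℝ, (∀ j, |y j - x₀ j| ≤ 2) → g y ≤ M := by
    have key : ∀ s : Finset ι, ∀ y : ι → ℝ, (∀ j, |y j - x₀ j| ≤ 2) →
        (∀ j ∉ s, y j = x₀ j + 2 ∨ y j = x₀ j - 2) → g y ≤ M := by
      intro s
      induction s using Finset.induction_on with
      | empty =>
        intro y hy hc
        have hyc : y = fun j => x₀ j +
            if (if y j = x₀ j + 2 then true else false) then (2 : ℝ) else -2 := by
          funext j
          rcases hc j (Finset.notMem_empty j) with h | h
          · simp [h]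
          · have hne2 : x₀ j - 2 ≠ x₀ j + 2 := by intro he; linarith
            rw [h, if_neg hne2]
            norm_num
            ring
        rw [hyc, hMdef]
        exact Finset.le_sup' (fun ε : ι → Bool => g fun j => x₀ j + if ε j then (2 : ℝ) else -2)
          (Finset.mem_univ (fun j => if y j = x₀ j + 2 then true else false))
      | @insert j s hj ih =>
        intro y hy hc
        have hyj : y j ∈ segment ℝ (x₀ j - 2) (x₀ j + 2) := by
          rw [segment_eq_Icc (by linarith : x₀ j - 2 ≤ x₀ j + 2)]
          have := hy j; rw [abs_le] at this
          exact ⟨by linarith [this.1], by linarith [this.2]⟩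
        have hmax : g y ≤ max (g (Function.update y j (x₀ j - 2)))
            (g (Function.update y j (x₀ j + 2))) := by
          have := (hg y j).le_on_segment (Set.mem_univ _) (Set.mem_univ _) hyj
          simpa [Function.update_eq_self] using this
        have hside : ∀ c : ℝ, c = x₀ j + 2 ∨ c = x₀ j - 2 →
            g (Function.update y j c) ≤ M := by
          intro c hcc
          apply ih
          · intro j'
            rcases eq_or_ne j' j with rfl | h
            · rw [Function.update_self]
              rcases hcc with h | h <;> rw [h, abs_le] <;> constructor <;> linarith
            · rw [Function.update_of_ne h]; exact hy j'
          · intro j' hj'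
            rcases eq_or_ne j' j with rfl | h
            · rw [Function.update_self]; exact hcc
            · rw [Function.update_of_ne h]
              exact hc j' (by simp [Finset.mem_insert, h, hj'])
        refine hmax.trans (max_le (hside _ (Or.inr rfl)) (hside _ (Or.inl rfl)))
    intro y hy
    exact key Finset.univ y hy (fun j hj => absurd (Finset.mem_univ j) hj)
  have hx₀M : g x₀ ≤ M := upper x₀ (by intro j; simp)
  obtain ⟨N, hN⟩ : ∃ N : ℕ, N = Fintype.card ι := ⟨_, rfl⟩
  obtain ⟨m, hmdef⟩ : ∃ m : ℝ, m = 2 ^ N * (g x₀ - M) + M := ⟨_, rfl⟩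
  have lower : ∀ y : ι → ℝ, (∀ j, |y j - x₀ j| ≤ 2) → m ≤ g y := by
    have key : ∀ s : Finset ι, ∀ y : ι → ℝ, (∀ j, |y j - x₀ j| ≤ 2) →
        (∀ j ∉ s, y j = x₀ j) → 2 ^ s.card * (g x₀ - M) + M ≤ g y := by
      intro s
      induction s using Finset.induction_on with
      | empty =>
        intro y hy hc
        have hyx : y = x₀ := funext fun j => hc j (Finset.notMem_empty j)
        rw [hyx]; simp
      | @insert j s hj ih =>
        intro y hy hc
        have hy' : 2 ^ s.card * (g x₀ - M) + M ≤ g (Function.update y j (x₀ j)) := by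
          apply ih
          · intro j'
            rcases eq_or_ne j' j with rfl | h
            · rw [Function.update_self]; simp
            · rw [Function.update_of_ne h]; exact hy j'
          · intro j' hj'
            rcases eq_or_ne j' j with rfl | h
            · rw [Function.update_self]
            · rw [Function.update_of_ne h]
              exact hc j' (by simp [Finset.mem_insert, h, hj'])
        have hy'' : g (Function.update y j (2 * x₀ j - y j)) ≤ M := by
          apply upper
          intro j'
          rcases eq_or_ne j' j with rfl | h
          · rw [Function.update_self]
            have := hy j'; rw [abs_le] at this ⊢
            constructor <;> linarith [this.1, this.2]
          · rw [Function.update_of_ne h]; exact hy j'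
        have hmid : g (Function.update y j (x₀ j)) ≤
            (1 / 2) * g y + (1 / 2) * g (Function.update y j (2 * x₀ j - y j)) := by
          have key2 := (hg y j).2 (Set.mem_univ (y j)) (Set.mem_univ (2 * x₀ j - y j))
            (by norm_num : (0:ℝ) ≤ 1/2) (by norm_num : (0:ℝ) ≤ 1/2) (by norm_num)
          simp only [smul_eq_mul] at key2
          have e : (1 / 2 : ℝ) * y j + 1 / 2 * (2 * x₀ j - y j) = x₀ j := by ring
          rw [e] at key2
          simpa [Function.update_eq_self] using key2
        rw [Finset.card_insert_of_notMem hj, pow_succ]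
        linarith [hy', hy'', hmid]
    intro y hy
    have := key Finset.univ y hy (fun j hj => absurd (Finset.mem_univ j) hj)
    rwa [Finset.card_univ, ← hN, ← hmdef] at this
  have hmx₀ : m ≤ g x₀ := by
    have h1 : (1 : ℝ) ≤ 2 ^ N := one_le_pow₀ (by norm_num)
    rw [hmdef]; nlinarith [hx₀M]
  have hK : (0 : ℝ) ≤ M - m := by linarith
  -- one-coordinate Lipschitz step
  have step : ∀ (y : ι → ℝ) (j : ι) (t : ℝ), (∀ j', |y j' - x₀ j'| ≤ 1) →
      |t - x₀ j| ≤ 1 →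
      |g (Function.update y j t) - g y| ≤ (M - m) * |t - y j| := by
    intro y j t hy ht
    have cube2 : ∀ c : ℝ, |c - x₀ j| ≤ 2 → ∀ j', |Function.update y j c j' - x₀ j'| ≤ 2 := by
      intro c hcc j'
      rcases eq_or_ne j' j with rfl | h
      · rw [Function.update_self]; exact hcc
      · rw [Function.update_of_ne h]; linarith [hy j', abs_nonneg (y j' - x₀ j')]
    have one : ∀ s u : ℝ, |s - x₀ j| ≤ 1 → |u - x₀ j| ≤ 1 →
        g (Function.update y j u) - g (Function.update y j s) ≤ (M - m) * |u - s| := by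
      intro s u hs hu
      rcases eq_or_ne u s with rfl | hne
      · simp
      · obtain ⟨d, hd⟩ : ∃ d : ℝ, d = |u - s| := ⟨_, rfl⟩
        have hdpos : 0 < d := hd ▸ abs_pos.mpr (sub_ne_zero.mpr hne)
        obtain ⟨w, hw⟩ : ∃ w : ℝ, w = u + (u - s) / d := ⟨_, rfl⟩
        have hwx : |w - x₀ j| ≤ 2 := by
          have h1 : |(u - s) / d| = 1 := by
            rw [abs_div, ← hd, abs_of_pos hdpos, div_self (ne_of_gt hdpos)]
          have h2 : w - x₀ j = (u - x₀ j) + (u - s) / d := by rw [hw]; ring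
          rw [h2]
          calc |(u - x₀ j) + (u - s) / d| ≤ |u - x₀ j| + |(u - s) / d| := abs_add_le _ _
            _ ≤ 2 := by rw [h1]; linarith
        have hd1 : (0 : ℝ) < d + 1 := by linarith
        have hcomb : (1 / (d + 1)) * s + (d / (d + 1)) * w = u := by
          rw [hw]; field_simp; ring
        have hconv := (hg y j).2 (Set.mem_univ s) (Set.mem_univ w)
          (by positivity : (0:ℝ) ≤ 1 / (d + 1)) (by positivity : (0:ℝ) ≤ d / (d + 1))
          (by field_simp; ring)
        simp only [smul_eq_mul] at hconv
        rw [hcomb] at hconv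
        have hwM : g (Function.update y j w) ≤ M := upper _ (cube2 w hwx)
        have hsm : m ≤ g (Function.update y j s) :=
          lower _ (cube2 s (by linarith [abs_nonneg (s - x₀ j)]))
        have hfrac : d / (d + 1) ≤ d := by
          rw [div_le_iff₀ hd1]; nlinarith
        have hab : 1 / (d + 1) + d / (d + 1) = 1 := by field_simp; ring
        have e1 : (1 : ℝ) / (d + 1) = 1 - d / (d + 1) := eq_sub_iff_add_eq.mpr hab
        have h3 : g (Function.update y j u) - g (Function.update y j s) ≤
            (d / (d + 1)) * (g (Function.update y j w) - g (Function.update y j s)) := by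
          calc g (Function.update y j u) - g (Function.update y j s)
              ≤ (1 / (d + 1)) * g (Function.update y j s) +
                (d / (d + 1)) * g (Function.update y j w) -
                g (Function.update y j s) := by linarith [hconv]
            _ = (d / (d + 1)) * (g (Function.update y j w) - g (Function.update y j s)) := by
                rw [e1]; ring
        have h4 : (d / (d + 1)) * (g (Function.update y j w) - g (Function.update y j s)) ≤
            (d / (d + 1)) * (M - m) :=
          mul_le_mul_of_nonneg_left (by linarith) (by positivity)
        have h5 : (d / (d + 1)) * (M - m) ≤ d * (M - m) :=
          mul_le_mul_of_nonneg_right hfrac hK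
        have h6 : (M - m) * d = d * (M - m) := mul_comm _ _
        rw [← hd]
        linarith
    have h1 := one (y j) t (hy j) ht
    have h2 := one t (y j) ht (hy j)
    rw [Function.update_eq_self] at h1 h2
    rw [abs_sub_le_iff]
    constructor
    · exact h1
    · rw [abs_sub_comm t (y j)]; exact h2
  -- chaining
  have chain : ∀ y z : ι → ℝ, (∀ j, |y j - x₀ j| ≤ 1) → (∀ j, |z j - x₀ j| ≤ 1) →
      |g z - g y| ≤ N * (M - m) * dist z y := by
    intro y z hy hz
    have key : ∀ s : Finset ι,
        |g (fun j => if j ∈ s then z j else y j) - g y| ≤ s.card * (M - m) * dist z y := by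
      intro s
      induction s using Finset.induction_on with
      | empty => simp
      | @insert j s hj ih =>
        have hupd : (fun j' => if j' ∈ insert j s then z j' else y j') =
            Function.update (fun j' => if j' ∈ s then z j' else y j') j (z j) := by
          funext j'
          rcases eq_or_ne j' j with rfl | h
          · simp
          · simp [Function.update_of_ne h, Finset.mem_insert, h]
        have hws : ∀ j', |(fun j'' => if j'' ∈ s then z j'' else y j'') j' - x₀ j'| ≤ 1 := by
          intro j'; by_cases h : j' ∈ s <;> simp [h, hy j', hz j']
        have hstep := step _ j (z j) hws (hz j)
        rw [if_neg hj] at hstep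
        have hdj : |z j - y j| ≤ dist z y := by
          rw [← Real.dist_eq]; exact dist_le_pi_dist z y j
        have hKd : (M - m) * |z j - y j| ≤ (M - m) * dist z y :=
          mul_le_mul_of_nonneg_left hdj hK
        have htri : |g (fun j' => if j' ∈ insert j s then z j' else y j') - g y| ≤
            |g (fun j' => if j' ∈ insert j s then z j' else y j') -
              g (fun j' => if j' ∈ s then z j' else y j')| +
            |g (fun j' => if j' ∈ s then z j' else y j') - g y| := abs_sub_le _ _ _
        rw [hupd] at htri ⊢
        rw [Finset.card_insert_of_notMem hj]
        push_cast
        calc |g (Function.update (fun j' => if j' ∈ s then z j' else y j') j (z j)) - g y|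
            ≤ _ + _ := htri
          _ ≤ (M - m) * dist z y + s.card * (M - m) * dist z y := by
              refine add_le_add (hstep.trans hKd) ih
          _ = (s.card + 1) * (M - m) * dist z y := by ring
    have := key Finset.univ
    have hzz : (fun j => if j ∈ Finset.univ then z j else y j) = z := by
      funext j; simp
    rw [hzz, Finset.card_univ, ← hN] at this
    exact this
  refine ⟨Real.toNNReal (N * (M - m)), Metric.closedBall x₀ 1,
    Metric.closedBall_mem_nhds x₀ one_pos, ?_⟩
  apply LipschitzOnWith.of_dist_le_mul
  intro y hy z hz
  have hy1 : ∀ j, |y j - x₀ j| ≤ 1 := by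
    intro j
    rw [← Real.dist_eq]
    exact (dist_le_pi_dist y x₀ j).trans (Metric.mem_closedBall.mp hy)
  have hz1 : ∀ j, |z j - x₀ j| ≤ 1 := by
    intro j
    rw [← Real.dist_eq]
    exact (dist_le_pi_dist z x₀ j).trans (Metric.mem_closedBall.mp hz)
  have := chain z y hz1 hy1
  rw [Real.dist_eq, Real.coe_toNNReal _ (by positivity : (0:ℝ) ≤ N * (M - m))]
  calc |g y - g z| ≤ N * (M - m) * dist y z := this
    _ = N * (M - m) * dist y z := rfl

private lemma wedge_indicator {n kk : ℕ} (S : Finset (Fin n)) (hS : S.card = kk + 1)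
    (s₀ : Fin n) (hs₀ : s₀ ∈ S) (hmin : ∀ j ∈ S, ¬ j < s₀) (T : IdxSet n (1 + kk)) :
    wedge (n := n) (k := 1) (l := kk)
      (fun A => if A.1 = {s₀} then 1 else 0)
      (fun B => if B.1 = S.erase s₀ then 1 else 0) T
      = if T.1 = S then 1 else 0 := by
  classical
  unfold wedge
  by_cases hTS : T.1 = S
  · rw [if_pos hTS]
    have hmem : ({s₀} : Finset (Fin n)) ∈ T.1.powerset := by
      rw [Finset.mem_powerset, hTS]; exact Finset.singleton_subset_iff.mpr hs₀
    rw [Finset.sum_eq_single_of_mem (⟨{s₀}, hmem⟩ : {A // A ∈ T.1.powerset})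
        (Finset.mem_attach _ _)]
    · rw [dif_pos (Finset.card_singleton s₀)]
      beta_reduce
      rw [if_pos rfl]
      have hsd : T.1 \ {s₀} = S.erase s₀ := by rw [hTS, ← Finset.erase_eq]
      rw [if_pos hsd]
      have hsig : interSign {s₀} (T.1 \ {s₀}) = 1 := by
        unfold interSign
        have hemp : (({s₀} ×ˢ (T.1 \ {s₀})).filter fun p => p.2 < p.1) = ∅ := by
          rw [Finset.filter_eq_empty_iff]
          intro p hp
          rw [Finset.mem_product, Finset.mem_singleton] at hp
          obtain ⟨hp1, hp2⟩ := hp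
          rw [hsd, Finset.mem_erase] at hp2
          intro hlt
          exact hmin p.2 hp2.2 (by rwa [hp1] at hlt)
        rw [hemp]
        simp
      rw [hsig]; ring
    · intro A _ hne
      by_cases hA : A.1.card = 1
      · rw [dif_pos hA]
        beta_reduce
        have hA1 : A.1 ≠ {s₀} := fun h => hne (Subtype.ext h)
        rw [if_neg hA1]; ring
      · rw [dif_neg hA]
  · rw [if_neg hTS]
    apply Finset.sum_eq_zero
    intro A _
    by_cases hA : A.1.card = 1
    · rw [dif_pos hA]
      beta_reduce
      by_cases h1 : A.1 = {s₀}
      · by_cases h2 : T.1 \ A.1 = S.erase s₀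
        · exfalso
          apply hTS
          have hsub : A.1 ⊆ T.1 := Finset.mem_powerset.mp A.2
          have hu : A.1 ∪ (T.1 \ A.1) = T.1 := Finset.union_sdiff_of_subset hsub
          rw [h2] at hu
          rw [h1] at hu
          rw [← hu, ← Finset.insert_eq, Finset.insert_erase hs₀]
        · rw [if_neg h2]; ring
      · rw [if_neg h1]; ring
    · rw [dif_neg hA]

/-- Every vectorially ext. one convex function is locally Lipschitz. -/
theorem stmt2 {n m : ℕ} (hm : 1 ≤ m) (k : Fin m → ℕ) (hk : ∀ i, k i + 1 ≤ n)
    (f : ((i : Fin m) → Lam n (k i + 1)) → ℝ) (hf : VOneConvex k f) :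
    LocallyLipschitz f := by
  classical
  -- Step 1: f is separately convex in each scalar coordinate direction.
  have hsep : ∀ (ξ : (i : Fin m) → Lam n (k i + 1)) (i : Fin m) (S : IdxSet n (k i + 1)),
      ConvexOn ℝ Set.univ fun t : ℝ =>
        f fun i' => ξ i' + t • Function.update
          (fun i'' => (0 : Lam n (k i'' + 1))) i
          (fun T : IdxSet n (k i + 1) => if T.1 = S.1 then (1 : ℝ) else 0) i' := by
    intro ξ i S
    have hne : S.1.Nonempty := Finset.card_pos.mp (by rw [S.2]; omega)
    have hs₀ : S.1.min' hne ∈ S.1 := Finset.min'_mem _ _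
    have hmin : ∀ j ∈ S.1, ¬ j < S.1.min' hne := fun j hj =>
      not_lt.mpr (Finset.min'_le S.1 j hj)
    have key := hf ξ (fun A => if A.1 = {S.1.min' hne} then 1 else 0)
      (Function.update (fun i'' => (0 : Lam n (k i''))) i
        (fun B : IdxSet n (k i) => if B.1 = S.1.erase (S.1.min' hne) then (1 : ℝ) else 0))
    have heq : ∀ i' : Fin m,
        lamCast (Nat.add_comm 1 (k i'))
          (wedge (fun A => if A.1 = {S.1.min' hne} then 1 else 0)
            (Function.update (fun i'' => (0 : Lam n (k i''))) i
              (fun B : IdxSet n (k i) =>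
                if B.1 = S.1.erase (S.1.min' hne) then (1 : ℝ) else 0) i')) =
        Function.update (fun i'' => (0 : Lam n (k i'' + 1))) i
          (fun T : IdxSet n (k i + 1) => if T.1 = S.1 then (1 : ℝ) else 0) i' := by
      intro i'
      rcases eq_or_ne i' i with rfl | hne'
      · rw [Function.update_self, Function.update_self]
        funext T
        show wedge _ _ (⟨T.1, _⟩ : IdxSet n (1 + k i')) = _
        rw [wedge_indicator S.1 S.2 (S.1.min' hne) hs₀ hmin]
      · rw [Function.update_of_ne hne', Function.update_of_ne hne']
        funext T
        show wedge _ (fun _ => (0 : ℝ)) (⟨T.1, _⟩ : IdxSet n (1 + k i')) = (0 : ℝ)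
        unfold wedge
        apply Finset.sum_eq_zero
        intro A _
        by_cases hA : A.1.card = 1
        · rw [dif_pos hA]; ring
        · rw [dif_neg hA]
    have hfun : (fun t : ℝ => f fun i' => ξ i' + t • Function.update
          (fun i'' => (0 : Lam n (k i'' + 1))) i
          (fun T : IdxSet n (k i + 1) => if T.1 = S.1 then (1 : ℝ) else 0) i') =
        fun t : ℝ => f fun i' => ξ i' + t • lamCast (Nat.add_comm 1 (k i'))
          (wedge (fun A => if A.1 = {S.1.min' hne} then 1 else 0)
            (Function.update (fun i'' => (0 : Lam n (k i''))) i
              (fun B : IdxSet n (k i) =>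
                if B.1 = S.1.erase (S.1.min' hne) then (1 : ℝ) else 0) i')) := by
      funext t
      congr 1
      funext i'
      rw [heq i']
    rw [hfun]
    exact key
  -- Step 2: pass to the sigma-indexed coordinate space and apply the general lemma.
  have hgconv : ∀ (x : (Σ i : Fin m, IdxSet n (k i + 1)) → ℝ)
      (p : Σ i : Fin m, IdxSet n (k i + 1)),
      ConvexOn ℝ Set.univ fun t => f (fun i S => Function.update x p t ⟨i, S⟩) := by
    intro x p
    obtain ⟨i, S⟩ := p
    have key := convexOn_shift (hsep (fun i' S' => x ⟨i', S'⟩) i S) (x ⟨i, S⟩)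
    have heq : ∀ t : ℝ, (fun i' S' => Function.update x ⟨i, S⟩ t ⟨i', S'⟩) =
        fun i' => (fun S' => x ⟨i', S'⟩) + (t - x ⟨i, S⟩) • Function.update
          (fun i'' => (0 : Lam n (k i'' + 1))) i
          (fun T : IdxSet n (k i + 1) => if T.1 = S.1 then (1 : ℝ) else 0) i' := by
      intro t
      funext i' S'
      rcases eq_or_ne i' i with rfl | hne'
      · rw [Function.update_self]
        by_cases hS' : S' = S
        · subst hS'
          rw [Function.update_self]
          simp [if_pos rfl]
        · have hp : (⟨i', S'⟩ : Σ i : Fin m, IdxSet n (k i + 1)) ≠ ⟨i', S⟩ := by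
            intro h
            exact hS' (eq_of_heq (Sigma.mk.inj_iff.mp h).2)
          rw [Function.update_of_ne hp]
          have hS1 : S'.1 ≠ S.1 := fun h => hS' (Subtype.ext h)
          simp [Pi.add_apply, Pi.smul_apply, if_neg hS1]
      · have hp : (⟨i', S'⟩ : Σ i : Fin m, IdxSet n (k i + 1)) ≠ ⟨i, S⟩ := by
          intro h
          exact hne' (congrArg Sigma.fst h)
        rw [Function.update_of_ne hp, Function.update_of_ne hne']
        simp
    have hfun : (fun t => f (fun i' S' => Function.update x ⟨i, S⟩ t ⟨i', S'⟩)) =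
        fun t => f fun i' => (fun S' => x ⟨i', S'⟩) + (t - x ⟨i, S⟩) • Function.update
          (fun i'' => (0 : Lam n (k i'' + 1))) i
          (fun T : IdxSet n (k i + 1) => if T.1 = S.1 then (1 : ℝ) else 0) i' := by
      funext t
      rw [heq t]
    rw [hfun]
    exact key
  have hloc : LocallyLipschitz
      (fun x : (Σ i : Fin m, IdxSet n (k i + 1)) → ℝ => f (fun i S => x ⟨i, S⟩)) := by
    apply sepConvex_locallyLipschitz
    intro x p
    have := hgconv x p
    convert this using 2
  have hσ : LipschitzWith 1
      (fun ξ : (i : Fin m) → Lam n (k i + 1) =>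
        (fun p : Σ i : Fin m, IdxSet n (k i + 1) => ξ p.1 p.2)) := by
    apply LipschitzWith.of_dist_le_mul
    intro ξ η
    rw [NNReal.coe_one, one_mul]
    refine (dist_pi_le_iff dist_nonneg).mpr fun p => ?_
    exact le_trans (dist_le_pi_dist (ξ p.1) (η p.1) p.2) (dist_le_pi_dist ξ η p.1)
  have hff : f = (fun x : (Σ i : Fin m, IdxSet n (k i + 1)) → ℝ => f (fun i S => x ⟨i, S⟩)) ∘
      (fun ξ : (i : Fin m) → Lam n (k i + 1) =>
        (fun p : Σ i : Fin m, IdxSet n (k i + 1) => ξ p.1 p.2)) := by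
    funext ξ
    rfl
  rw [hff]
  exact hloc.comp hσ.locallyLipschitz

end
end

section
/- Let 𝐩 = (p_1,…,p_m) with 1 ≤ p_i < ∞ for all i. Let f : Λ^{𝐤} → ℝ be separately convex and satisfy |f(ξ)| ≤ α(1 + Σ_{i=1}^m |ξ_i|^{p_i}) for all ξ ∈ Λ^{𝐤}, where α > 0. Then there exist constants β_i > 0, i = 1,…,m, such that for all ξ, ζ ∈ Λ^{𝐤}: |f(ξ) − f(ζ)| ≤ Σ_{i=1}^m β_i ( 1 + Σ_{j=1}^m ( |ξ_j|^{p_j/p_i'} + |ζ_j|^{p_j/p_i'} ) ) |ξ_i − ζ_i|, where p_i' = p_i/(p_i − 1) is the Hölder conjugate of p_i (so p_j/p_i' = p_j(p_i−1)/p_i, interpreted as 0 when p_i = 1). -/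
open MeasureTheory Filter Topology
open scoped ENNReal

noncomputable section

section Stmt6Helpers

lemma nL_nonneg' {n k : ℕ} (x : Lam n k) : 0 ≤ nL x := Real.sqrt_nonneg _

lemma sqrt_add_le' {a b : ℝ} (ha : 0 ≤ a) (hb : 0 ≤ b) :
    Real.sqrt (a + b) ≤ Real.sqrt a + Real.sqrt b := by
  have h : a + b ≤ (Real.sqrt a + Real.sqrt b) ^ 2 := by
    nlinarith [Real.sq_sqrt ha, Real.sq_sqrt hb, Real.sqrt_nonneg a, Real.sqrt_nonneg b]
  calc Real.sqrt (a + b) ≤ Real.sqrt ((Real.sqrt a + Real.sqrt b) ^ 2) := Real.sqrt_le_sqrt h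
  _ = _ := Real.sqrt_sq (by positivity)

lemma coord_abs_le {n k : ℕ} (x : Lam n k) (S : IdxSet n k) : |x S| ≤ nL x := by
  rw [← Real.sqrt_sq_eq_abs]
  exact Real.sqrt_le_sqrt (Finset.single_le_sum (f := fun S' => x S' ^ 2)
    (fun S' _ => sq_nonneg _) (Finset.mem_univ S))

lemma nL_single' {n k : ℕ} (S : IdxSet n k) (c : ℝ) :
    nL (fun S' => if S' = S then c else 0) = |c| := by
  rw [nL, Finset.sum_eq_single S]
  · simp [Real.sqrt_sq_eq_abs]
  · intro b _ hb; simp [hb]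
  · simp

lemma nL_add_le {n k : ℕ} (x y : Lam n k) : nL (fun S => x S + y S) ≤ nL x + nL y := by
  have hx : (nL x) ^ 2 = ∑ S, x S ^ 2 := Real.sq_sqrt (by positivity)
  have hy : (nL y) ^ 2 = ∑ S, y S ^ 2 := Real.sq_sqrt (by positivity)
  have hcs : ∑ S, x S * y S ≤ nL x * nL y := by
    have key := Finset.sum_mul_sq_le_sq_mul_sq Finset.univ x y
    calc ∑ S, x S * y S ≤ |∑ S, x S * y S| := le_abs_self _
    _ = Real.sqrt ((∑ S, x S * y S) ^ 2) := (Real.sqrt_sq_eq_abs _).symm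
    _ ≤ Real.sqrt ((∑ S, x S ^ 2) * ∑ S, y S ^ 2) := Real.sqrt_le_sqrt key
    _ = nL x * nL y := by rw [Real.sqrt_mul (by positivity)]; rfl
  have hsum : ∑ S, (x S + y S) ^ 2 ≤ (nL x + nL y) ^ 2 := by
    have : ∑ S, (x S + y S) ^ 2 = (∑ S, x S ^ 2) + 2 * (∑ S, x S * y S) + ∑ S, y S ^ 2 := by
      rw [Finset.mul_sum, ← Finset.sum_add_distrib, ← Finset.sum_add_distrib]
      apply Finset.sum_congr rfl
      intros; ring
    nlinarith [nL_nonneg' x, nL_nonneg' y]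
  calc nL (fun S => x S + y S) ≤ Real.sqrt ((nL x + nL y) ^ 2) := Real.sqrt_le_sqrt hsum
  _ = nL x + nL y := Real.sqrt_sq (add_nonneg (nL_nonneg' x) (nL_nonneg' y))

lemma nL_update_le {n k : ℕ} (v : Lam n k) (S : IdxSet n k) (t : ℝ) :
    nL (Function.update v S t) ≤ nL v + |t - v S| := by
  have h : Function.update v S t = fun S' => v S' + if S' = S then t - v S else 0 := by
    funext S'
    by_cases h : S' = S
    · subst h; simp
    · simp [Function.update_of_ne h, h]
  rw [h]
  calc nL (fun S' => v S' + (fun S'' => if S'' = S then t - v S else 0) S')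
      ≤ nL v + nL (fun S' => if S' = S then t - v S else 0) := nL_add_le _ _
  _ = nL v + |t - v S| := by rw [nL_single']

lemma nL_hyb {n k : ℕ} {η ξ ζ : Lam n k} (h : ∀ S, η S = ξ S ∨ η S = ζ S) :
    nL η ≤ nL ξ + nL ζ := by
  have h1 : ∑ S, η S ^ 2 ≤ (∑ S, ξ S ^ 2) + ∑ S, ζ S ^ 2 := by
    rw [← Finset.sum_add_distrib]
    apply Finset.sum_le_sum
    intro S _
    rcases h S with h' | h' <;> rw [h'] <;> nlinarith [sq_nonneg (ξ S), sq_nonneg (ζ S)]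
  calc nL η ≤ Real.sqrt ((∑ S, ξ S ^ 2) + ∑ S, ζ S ^ 2) := Real.sqrt_le_sqrt h1
  _ ≤ _ := sqrt_add_le' (by positivity) (by positivity)

lemma two_rpow_bound {x y q : ℝ} (hx : 0 ≤ x) (hy : 0 ≤ y) (hq : 0 ≤ q) :
    (x + y) ^ q ≤ 2 ^ q * (x ^ q + y ^ q) := by
  have h1 : x + y ≤ 2 * max x y := by
    rcases le_total x y with h | h
    · rw [max_eq_right h]; linarith
    · rw [max_eq_left h]; linarith
  have h2 : (x + y) ^ q ≤ (2 * max x y) ^ q :=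
    Real.rpow_le_rpow (by linarith) h1 hq
  have h3 : (2 * max x y) ^ q = 2 ^ q * (max x y) ^ q :=
    Real.mul_rpow (by norm_num) (le_max_of_le_left hx)
  have h4 : (max x y) ^ q ≤ x ^ q + y ^ q := by
    rcases max_cases x y with ⟨h, _⟩ | ⟨h, _⟩ <;> rw [h]
    · nlinarith [Real.rpow_nonneg hy q]
    · nlinarith [Real.rpow_nonneg hx q]
  calc (x + y) ^ q ≤ 2 ^ q * (max x y) ^ q := by rw [← h3]; exact h2
  _ ≤ 2 ^ q * (x ^ q + y ^ q) := by
      have : (0:ℝ) ≤ 2 ^ q := Real.rpow_nonneg (by norm_num) q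
      nlinarith

lemma rpow_subadd {x y q : ℝ} (hx : 0 ≤ x) (hy : 0 ≤ y) (hq : 0 ≤ q) (hq1 : q ≤ 1) :
    (x + y) ^ q ≤ x ^ q + y ^ q := by
  have h := NNReal.rpow_add_le_add_rpow x.toNNReal y.toNNReal hq hq1
  have := NNReal.coe_le_coe.mpr h
  push_cast at this
  rwa [Real.coe_toNNReal x hx, Real.coe_toNNReal y hy] at this

lemma rpow_sum_subadd {ι : Type*} (s : Finset ι) (g : ι → ℝ) (hg : ∀ j ∈ s, 0 ≤ g j)
    {q : ℝ} (h0 : 0 < q) (h1 : q ≤ 1) :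
    (∑ j ∈ s, g j) ^ q ≤ ∑ j ∈ s, g j ^ q := by
  classical
  induction s using Finset.induction_on with
  | empty => simp [Real.zero_rpow h0.ne']
  | insert c s' ha ih =>
    rw [Finset.sum_insert ha, Finset.sum_insert ha]
    have hgc : 0 ≤ g c := hg c (Finset.mem_insert_self _ _)
    have hs : 0 ≤ ∑ j ∈ s', g j :=
      Finset.sum_nonneg fun j hj => hg j (Finset.mem_insert_of_mem hj)
    calc (g c + ∑ j ∈ s', g j) ^ q ≤ g c ^ q + (∑ j ∈ s', g j) ^ q :=
          rpow_subadd hgc hs h0.le h1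
    _ ≤ g c ^ q + ∑ j ∈ s', g j ^ q := by
        have := ih fun j hj => hg j (Finset.mem_insert_of_mem hj)
        linarith

lemma convex_lip_aux {g : ℝ → ℝ} (hg : ConvexOn ℝ Set.univ g) {s t r M : ℝ}
    (hr : 0 < r) (hst : s ≤ t)
    (hM : ∀ u, s - r ≤ u → u ≤ t + r → |g u| ≤ M) :
    |g s - g t| ≤ 2 * M / r * |s - t| := by
  rcases eq_or_lt_of_le hst with rfl | hlt
  · simp
  have hb : ∀ u, s - r ≤ u → u ≤ t + r → -M ≤ g u ∧ g u ≤ M :=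
    fun u h1 h2 => abs_le.mp (hM u h1 h2)
  obtain ⟨hs1, hs2⟩ := hb s (by linarith) (by linarith)
  obtain ⟨ht1, ht2⟩ := hb t (by linarith) (by linarith)
  obtain ⟨htr1, htr2⟩ := hb (t + r) (by linarith) (by linarith)
  obtain ⟨hsr1, hsr2⟩ := hb (s - r) (by linarith) (by linarith)
  have h1 : (g t - g s) / (t - s) ≤ (g (t + r) - g t) / (t + r - t) :=
    hg.slope_mono_adjacent (Set.mem_univ _) (Set.mem_univ _) hlt (by linarith)
  have h2 : (g s - g (s - r)) / (s - (s - r)) ≤ (g t - g s) / (t - s) :=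
    hg.slope_mono_adjacent (Set.mem_univ _) (Set.mem_univ _) (by linarith) hlt
  rw [show t + r - t = r by ring] at h1
  rw [show s - (s - r) = r by ring] at h2
  have hts : 0 < t - s := by linarith
  have hup : g t - g s ≤ 2 * M / r * (t - s) := by
    have : (g t - g s) / (t - s) ≤ 2 * M / r :=
      h1.trans ((div_le_div_iff_of_pos_right hr).mpr (by linarith))
    calc g t - g s = (g t - g s) / (t - s) * (t - s) := by field_simp
    _ ≤ 2 * M / r * (t - s) := by nlinarith
  have hlo : -(2 * M / r * (t - s)) ≤ g t - g s := by
    have hx : -(2 * M) / r ≤ (g t - g s) / (t - s) :=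
      le_trans ((div_le_div_iff_of_pos_right hr).mpr (by linarith)) h2
    calc -(2 * M / r * (t - s)) = -(2 * M) / r * (t - s) := by ring
    _ ≤ (g t - g s) / (t - s) * (t - s) := by nlinarith
    _ = g t - g s := by field_simp
  rw [abs_sub_comm, abs_sub_comm s t, abs_of_nonneg hts.le, abs_le]
  constructor <;> linarith

lemma convex_lip {g : ℝ → ℝ} (hg : ConvexOn ℝ Set.univ g) (s t r M : ℝ) (hr : 0 < r)
    (hM : ∀ u, min s t - r ≤ u → u ≤ max s t + r → |g u| ≤ M) :
    |g s - g t| ≤ 2 * M / r * |s - t| := by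
  rcases le_total s t with h | h
  · exact convex_lip_aux hg hr h
      (fun u h1 h2 => hM u (by rw [min_eq_left h]; exact h1) (by rw [max_eq_right h]; exact h2))
  · have := convex_lip_aux hg hr h
      (fun u h1 h2 => hM u (by rw [min_eq_right h]; exact h1) (by rw [max_eq_left h]; exact h2))
    rw [abs_sub_comm, abs_sub_comm s t]
    exact this

end Stmt6Helpers

/-- A separately convex function with `|f(ξ)| ≤ α(1 + Σ|ξ_i|^{p_i})`
satisfies the Lipschitz-type estimate with exponents `p_j/p_i'`. -/
theorem stmt6 {n m : ℕ} (hm : 1 ≤ m) (k : Fin m → ℕ) (hk : ∀ i, k i + 1 ≤ n)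
    (p : Fin m → ℝ) (hp : ∀ i, 1 ≤ p i)
    (f : ((i : Fin m) → Lam n (k i + 1)) → ℝ) (hsep : SepConvex f)
    (a : ℝ) (ha : 0 < a)
    (hgrowth : ∀ ξ, |f ξ| ≤ a * (1 + ∑ i, nL (ξ i) ^ p i)) :
    ∃ β : Fin m → ℝ, (∀ i, 0 < β i) ∧ ∀ ξ ζ,
      |f ξ - f ζ| ≤ ∑ i, β i *
        (1 + ∑ j, (nL (ξ j) ^ (p j * (p i - 1) / p i) + nL (ζ j) ^ (p j * (p i - 1) / p i))) *
        nL (ξ i - ζ i) := by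
  classical
  obtain ⟨B, hBdef⟩ : ∃ B : ℝ, B = ∑ j, (8 : ℝ) ^ p j := ⟨_, rfl⟩
  have hppos : ∀ i, (0:ℝ) < p i := fun i => lt_of_lt_of_le one_pos (hp i)
  have hB8 : ∀ j, (1:ℝ) ≤ 8 ^ p j := fun j => by
    calc (1:ℝ) = 1 ^ p j := (Real.one_rpow _).symm
    _ ≤ 8 ^ p j := Real.rpow_le_rpow zero_le_one (by norm_num) (by linarith [hp j])
  have hBpos : 0 < B := by
    rw [hBdef]
    have : Nonempty (Fin m) := ⟨⟨0, hm⟩⟩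
    exact Finset.sum_pos (fun j _ => lt_of_lt_of_le one_pos (hB8 j)) Finset.univ_nonempty
  refine ⟨fun i => 2 * a * (1 + 2 * B) * ((Fintype.card (IdxSet n (k i + 1)) : ℝ) + 1),
    fun i => by positivity, ?_⟩
  intro ξ ζ
  obtain ⟨R, hRdef⟩ : ∃ R : ℝ, R = 1 + ∑ j, (nL (ξ j) ^ p j + nL (ζ j) ^ p j) := ⟨_, rfl⟩
  have hT0 : 0 ≤ ∑ j, (nL (ξ j) ^ p j + nL (ζ j) ^ p j) :=
    Finset.sum_nonneg fun j _ =>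
      add_nonneg (Real.rpow_nonneg (nL_nonneg' _) _) (Real.rpow_nonneg (nL_nonneg' _) _)
  have hR1 : 1 ≤ R := by rw [hRdef]; linarith
  have hRpos : 0 < R := by linarith
  obtain ⟨r, hrdef⟩ : ∃ r : Fin m → ℝ, r = fun i => R ^ (1 / p i) := ⟨_, rfl⟩
  have hr1 : ∀ i, 1 ≤ r i := fun i => by
    rw [hrdef]
    calc (1:ℝ) = 1 ^ (1 / p i) := (Real.one_rpow _).symm
    _ ≤ R ^ (1 / p i) := Real.rpow_le_rpow zero_le_one hR1 (div_nonneg zero_le_one (hppos i).le)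
  have hrpos : ∀ i, 0 < r i := fun i => lt_of_lt_of_le one_pos (hr1 i)
  have hrp : ∀ i, r i ^ p i = R := fun i => by
    rw [hrdef]
    show (R ^ (1 / p i)) ^ p i = R
    rw [← Real.rpow_mul hRpos.le, one_div_mul_cancel (hppos i).ne', Real.rpow_one]
  have hterm : ∀ j, nL (ξ j) ^ p j + nL (ζ j) ^ p j ≤ R := fun j => by
    have h := Finset.single_le_sum (f := fun l => nL (ξ l) ^ p l + nL (ζ l) ^ p l)
      (fun l _ => add_nonneg (Real.rpow_nonneg (nL_nonneg' _) _)
        (Real.rpow_nonneg (nL_nonneg' _) _)) (Finset.mem_univ j)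
    rw [hRdef]; linarith
  obtain ⟨M, hMdef⟩ : ∃ M : ℝ, M = a * (1 + 2 * B) * R := ⟨_, rfl⟩
  have hMpos : 0 < M := by rw [hMdef]; positivity
  -- growth bound on perturbed hybrid points
  have hbound : ∀ (η : (i : Fin m) → Lam n (k i + 1)),
      (∀ i S, η i S = ξ i S ∨ η i S = ζ i S) →
      ∀ (i : Fin m) (S : IdxSet n (k i + 1)) (u : ℝ),
      |u - η i S| ≤ nL (ξ i) + nL (ζ i) + 2 * r i →
      |f (Function.update η i (Function.update (η i) S u))| ≤ M := by
    intro η hη i S u hu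
    have hnj : ∀ j, nL (Function.update η i (Function.update (η i) S u) j) ^ p j
        ≤ 2 * 8 ^ p j * R := by
      intro j
      have hp0 : (0:ℝ) ≤ p j := (hppos j).le
      have hc0 : (0:ℝ) < 2 ^ p j := Real.rpow_pos_of_pos (by norm_num) _
      have hc1 : (1:ℝ) ≤ 2 ^ p j := by
        calc (1:ℝ) = 1 ^ p j := (Real.one_rpow _).symm
        _ ≤ 2 ^ p j := Real.rpow_le_rpow zero_le_one (by norm_num) hp0
      have h8 : (2:ℝ) ^ p j * 2 ^ p j * 2 ^ p j = 8 ^ p j := by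
        rw [← Real.mul_rpow (by norm_num) (by norm_num),
          ← Real.mul_rpow (by norm_num) (by norm_num)]
        norm_num
      have hA : nL (ξ j) ^ p j + nL (ζ j) ^ p j ≤ R := hterm j
      have hA0 : 0 ≤ nL (ξ j) ^ p j + nL (ζ j) ^ p j :=
        add_nonneg (Real.rpow_nonneg (nL_nonneg' _) _) (Real.rpow_nonneg (nL_nonneg' _) _)
      have hxy0 : 0 ≤ nL (ξ j) + nL (ζ j) := add_nonneg (nL_nonneg' _) (nL_nonneg' _)
      have h5 : (nL (ξ j) + nL (ζ j)) ^ p j ≤ 2 ^ p j * (nL (ξ j) ^ p j + nL (ζ j) ^ p j) :=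
        two_rpow_bound (nL_nonneg' _) (nL_nonneg' _) hp0
      by_cases hj : j = i
      · subst hj
        have e1 : Function.update η j (Function.update (η j) S u) j
            = Function.update (η j) S u := Function.update_self _ _ _
        have h1 : nL (Function.update η j (Function.update (η j) S u) j)
            ≤ 2 * (nL (ξ j) + nL (ζ j)) + 2 * r j := by
          rw [e1]
          calc nL (Function.update (η j) S u) ≤ nL (η j) + |u - η j S| := nL_update_le _ _ _
          _ ≤ (nL (ξ j) + nL (ζ j)) + ((nL (ξ j) + nL (ζ j)) + 2 * r j) :=
              add_le_add (nL_hyb (hη j)) hu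
          _ = 2 * (nL (ξ j) + nL (ζ j)) + 2 * r j := by ring
        have h2 : nL (Function.update η j (Function.update (η j) S u) j) ^ p j
            ≤ (2 * (nL (ξ j) + nL (ζ j)) + 2 * r j) ^ p j :=
          Real.rpow_le_rpow (nL_nonneg' _) h1 hp0
        have h3 : (2 * (nL (ξ j) + nL (ζ j)) + 2 * r j) ^ p j
            ≤ 2 ^ p j * ((2 * (nL (ξ j) + nL (ζ j))) ^ p j + (2 * r j) ^ p j) :=
          two_rpow_bound (by linarith) (by linarith [hrpos j]) hp0
        have h4 : (2 * (nL (ξ j) + nL (ζ j))) ^ p j = 2 ^ p j * (nL (ξ j) + nL (ζ j)) ^ p j :=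
          Real.mul_rpow (by norm_num) hxy0
        have h6 : (2 * r j) ^ p j = 2 ^ p j * r j ^ p j := Real.mul_rpow (by norm_num) (hrpos j).le
        have hr6 : r j ^ p j = R := hrp j
        calc nL (Function.update η j (Function.update (η j) S u) j) ^ p j
            ≤ 2 ^ p j * ((2 * (nL (ξ j) + nL (ζ j))) ^ p j + (2 * r j) ^ p j) := h2.trans h3
        _ = 2 ^ p j * (2 ^ p j * (nL (ξ j) + nL (ζ j)) ^ p j + 2 ^ p j * R) := by
            rw [h4, h6, hr6]
        _ ≤ 2 ^ p j * (2 ^ p j * (2 ^ p j * (nL (ξ j) ^ p j + nL (ζ j) ^ p j)) + 2 ^ p j * R) := by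
            have := mul_le_mul_of_nonneg_left h5 hc0.le
            nlinarith
        _ = 2 ^ p j * 2 ^ p j * 2 ^ p j * (nL (ξ j) ^ p j + nL (ζ j) ^ p j)
            + 2 ^ p j * 2 ^ p j * R := by ring
        _ ≤ 8 ^ p j * R + 8 ^ p j * R := by
            have t1 : 2 ^ p j * 2 ^ p j * 2 ^ p j * (nL (ξ j) ^ p j + nL (ζ j) ^ p j)
                ≤ 2 ^ p j * 2 ^ p j * 2 ^ p j * R :=
              mul_le_mul_of_nonneg_left hA (by positivity)
            have t2 : 2 ^ p j * 2 ^ p j * R ≤ 2 ^ p j * 2 ^ p j * (2 ^ p j * R) :=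
              mul_le_mul_of_nonneg_left (le_mul_of_one_le_left hRpos.le hc1) (by positivity)
            rw [← h8]
            linarith [t1, t2]
        _ = 2 * 8 ^ p j * R := by ring
      · have e1 : Function.update η i (Function.update (η i) S u) j = η j :=
          Function.update_of_ne hj _ _
        have h1 : nL (Function.update η i (Function.update (η i) S u) j)
            ≤ nL (ξ j) + nL (ζ j) := by rw [e1]; exact nL_hyb (hη j)
        calc nL (Function.update η i (Function.update (η i) S u) j) ^ p j
            ≤ (nL (ξ j) + nL (ζ j)) ^ p j := Real.rpow_le_rpow (nL_nonneg' _) h1 hp0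
        _ ≤ 2 ^ p j * (nL (ξ j) ^ p j + nL (ζ j) ^ p j) := h5
        _ ≤ 2 * 8 ^ p j * R := by
            have hc8 : (2:ℝ) ^ p j ≤ 8 ^ p j := Real.rpow_le_rpow (by norm_num) (by norm_num) hp0
            have t1 : 2 ^ p j * (nL (ξ j) ^ p j + nL (ζ j) ^ p j) ≤ 2 ^ p j * R :=
              mul_le_mul_of_nonneg_left hA hc0.le
            have t2 : 2 ^ p j * R ≤ 8 ^ p j * R := mul_le_mul_of_nonneg_right hc8 hRpos.le
            have t3 : (0:ℝ) ≤ 8 ^ p j * R := mul_nonneg (by linarith [hB8 j]) hRpos.le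
            linarith
    have hsum : ∑ j, nL (Function.update η i (Function.update (η i) S u) j) ^ p j
        ≤ 2 * B * R := by
      calc ∑ j, nL (Function.update η i (Function.update (η i) S u) j) ^ p j
          ≤ ∑ j, 2 * 8 ^ p j * R := Finset.sum_le_sum fun j _ => hnj j
      _ = 2 * B * R := by
          rw [hBdef, Finset.mul_sum, Finset.sum_mul]
    calc |f (Function.update η i (Function.update (η i) S u))|
        ≤ a * (1 + ∑ j, nL (Function.update η i (Function.update (η i) S u) j) ^ p j) :=
          hgrowth _
    _ ≤ a * (1 + 2 * B * R) := by nlinarith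
    _ ≤ M := by rw [hMdef]; nlinarith
  -- one-coordinate step estimate
  have hstep : ∀ η, (∀ i S, η i S = ξ i S ∨ η i S = ζ i S) →
      ∀ (i : Fin m) (S : IdxSet n (k i + 1)),
      |f (Function.update η i (Function.update (η i) S (ξ i S))) -
       f (Function.update η i (Function.update (η i) S (ζ i S)))| ≤
      2 * M / r i * |ξ i S - ζ i S| := by
    intro η hη i S
    have hcv := hsep η i S
    have hMb : ∀ u, min (ξ i S) (ζ i S) - r i ≤ u → u ≤ max (ξ i S) (ζ i S) + r i →
        |f (Function.update η i (Function.update (η i) S u))| ≤ M := by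
      intro u h1 h2
      apply hbound η hη i S u
      have hξS : |ξ i S| ≤ nL (ξ i) := coord_abs_le _ _
      have hζS : |ζ i S| ≤ nL (ζ i) := coord_abs_le _ _
      have e1 : ξ i S ≤ |ξ i S| := le_abs_self _
      have e2 : -|ξ i S| ≤ ξ i S := neg_abs_le _
      have e3 : ζ i S ≤ |ζ i S| := le_abs_self _
      have e4 : -|ζ i S| ≤ ζ i S := neg_abs_le _
      have hmin : -(nL (ξ i) + nL (ζ i)) ≤ min (ξ i S) (ζ i S) := by
        apply le_min <;> linarith [nL_nonneg' (ξ i), nL_nonneg' (ζ i)]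
      have hmax : max (ξ i S) (ζ i S) ≤ nL (ξ i) + nL (ζ i) := by
        apply max_le <;> linarith [nL_nonneg' (ξ i), nL_nonneg' (ζ i)]
      have hdiff : max (ξ i S) (ζ i S) - min (ξ i S) (ζ i S) ≤ nL (ξ i) + nL (ζ i) := by
        rcases le_total (ξ i S) (ζ i S) with hh | hh
        · rw [max_eq_right hh, min_eq_left hh]; linarith
        · rw [max_eq_left hh, min_eq_right hh]; linarith
      have k1 : min (ξ i S) (ζ i S) ≤ ξ i S := min_le_left _ _
      have k2 : ξ i S ≤ max (ξ i S) (ζ i S) := le_max_left _ _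
      have k3 : min (ξ i S) (ζ i S) ≤ ζ i S := min_le_right _ _
      have k4 : ζ i S ≤ max (ξ i S) (ζ i S) := le_max_right _ _
      rcases hη i S with h | h <;> rw [h] <;> rw [abs_le] <;> constructor <;>
        linarith [hrpos i]
    have := convex_lip hcv (ξ i S) (ζ i S) (r i) M (hrpos i) hMb
    simpa using this
  -- telescoping over all scalar coordinates
  obtain ⟨hyb, hybdef⟩ : ∃ hyb : Finset ((i : Fin m) × IdxSet n (k i + 1)) →
      (i : Fin m) → Lam n (k i + 1),
      hyb = fun s i S => if (⟨i, S⟩ : (i : Fin m) × IdxSet n (k i + 1)) ∈ s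
        then ξ i S else ζ i S := ⟨_, rfl⟩
  have hyb_hyb : ∀ s i S, hyb s i S = ξ i S ∨ hyb s i S = ζ i S := fun s i S => by
    rw [hybdef]
    by_cases h : (⟨i, S⟩ : (i : Fin m) × IdxSet n (k i + 1)) ∈ s <;> simp [h]
  have E1 : ∀ (s : Finset ((i : Fin m) × IdxSet n (k i + 1)))
      (c : (i : Fin m) × IdxSet n (k i + 1)),
      hyb (insert c s) =
        Function.update (hyb s) c.1 (Function.update (hyb s c.1) c.2 (ξ c.1 c.2)) := by
    intro s c
    rcases c with ⟨ci, cS⟩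
    funext i
    by_cases hi : i = ci
    · subst hi
      rw [Function.update_self]
      funext S
      by_cases hS : S = cS
      · subst hS
        rw [Function.update_self, hybdef]
        simp
      · rw [Function.update_of_ne hS, hybdef]
        have hmem : ((⟨i, S⟩ : (i : Fin m) × IdxSet n (k i + 1)) ∈ insert ⟨i, cS⟩ s)
            ↔ (⟨i, S⟩ : (i : Fin m) × IdxSet n (k i + 1)) ∈ s := by
          simp [hS]
        simp only []
        rw [if_congr hmem rfl rfl]
    · rw [Function.update_of_ne hi]
      funext S
      rw [hybdef]
      have hmem : ((⟨i, S⟩ : (i : Fin m) × IdxSet n (k i + 1)) ∈ insert ⟨ci, cS⟩ s)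
          ↔ (⟨i, S⟩ : (i : Fin m) × IdxSet n (k i + 1)) ∈ s := by
        simp [hi]
      simp only []
      rw [if_congr hmem rfl rfl]
  have E2 : ∀ (s : Finset ((i : Fin m) × IdxSet n (k i + 1)))
      (c : (i : Fin m) × IdxSet n (k i + 1)), c ∉ s →
      hyb s = Function.update (hyb s) c.1 (Function.update (hyb s c.1) c.2 (ζ c.1 c.2)) := by
    intro s c hc
    have h1 : hyb s c.1 c.2 = ζ c.1 c.2 := by
      rw [hybdef]
      have : (⟨c.1, c.2⟩ : (i : Fin m) × IdxSet n (k i + 1)) = c := Sigma.eta c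
      simp only [this, if_neg hc]
    rw [← h1, Function.update_eq_self, Function.update_eq_self]
  have key : ∀ s : Finset ((i : Fin m) × IdxSet n (k i + 1)),
      |f (hyb s) - f ζ| ≤ ∑ c ∈ s, 2 * M / r c.1 * |ξ c.1 c.2 - ζ c.1 c.2| := by
    intro s
    induction s using Finset.induction_on with
    | empty =>
      have h0 : hyb ∅ = ζ := by rw [hybdef]; funext i S; simp
      simp [h0]
    | insert c s' hc ih =>
      rw [Finset.sum_insert hc]
      have h1 : |f (hyb (insert c s')) - f (hyb s')| ≤
          2 * M / r c.1 * |ξ c.1 c.2 - ζ c.1 c.2| := by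
        have h2 := hstep (hyb s') (hyb_hyb s') c.1 c.2
        rw [← E1 s' c, ← E2 s' c hc] at h2
        exact h2
      calc |f (hyb (insert c s')) - f ζ|
          ≤ |f (hyb (insert c s')) - f (hyb s')| + |f (hyb s') - f ζ| := abs_sub_le _ _ _
      _ ≤ _ := add_le_add h1 ih
  have huniv : hyb Finset.univ = ξ := by rw [hybdef]; funext i S; simp
  have main := key Finset.univ
  rw [huniv, ← Finset.univ_sigma_univ, Finset.sum_sigma] at main
  refine main.trans (Finset.sum_le_sum ?_)
  intro i _
  dsimp only
  have hD0 : 0 ≤ nL (ξ i - ζ i) := nL_nonneg' _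
  have hD : ∀ S, |ξ i S - ζ i S| ≤ nL (ξ i - ζ i) := fun S => by
    have := coord_abs_le (ξ i - ζ i) S
    simpa using this
  have hMr0 : 0 ≤ 2 * M / r i := div_nonneg (by linarith) (hrpos i).le
  have hQ0 : 0 ≤ ∑ j, (nL (ξ j) ^ (p j * (p i - 1) / p i) + nL (ζ j) ^ (p j * (p i - 1) / p i)) :=
    Finset.sum_nonneg fun j _ =>
      add_nonneg (Real.rpow_nonneg (nL_nonneg' _) _) (Real.rpow_nonneg (nL_nonneg' _) _)
  have hRdiv : R / r i = R ^ ((p i - 1) / p i) := by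
    rw [show (p i - 1) / p i = 1 - 1 / p i by rw [sub_div, div_self (hppos i).ne'],
      Real.rpow_sub hRpos, Real.rpow_one, hrdef]
  have hRθ : R ^ ((p i - 1) / p i) ≤
      1 + ∑ j, (nL (ξ j) ^ (p j * (p i - 1) / p i) + nL (ζ j) ^ (p j * (p i - 1) / p i)) := by
    have hθ0 : 0 ≤ (p i - 1) / p i := div_nonneg (by linarith [hp i]) (hppos i).le
    have hθ1 : (p i - 1) / p i ≤ 1 := by
      rw [div_le_one (hppos i)]; linarith
    rcases eq_or_lt_of_le hθ0 with h0 | h0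
    · rw [← h0, Real.rpow_zero]
      linarith
    · have sub1 : R ^ ((p i - 1) / p i) ≤
          1 + (∑ j, (nL (ξ j) ^ p j + nL (ζ j) ^ p j)) ^ ((p i - 1) / p i) := by
        rw [hRdef]
        calc (1 + ∑ j, (nL (ξ j) ^ p j + nL (ζ j) ^ p j)) ^ ((p i - 1) / p i)
            ≤ 1 ^ ((p i - 1) / p i) + (∑ j, (nL (ξ j) ^ p j + nL (ζ j) ^ p j)) ^ ((p i - 1) / p i) :=
              rpow_subadd zero_le_one hT0 hθ0 hθ1
        _ = _ := by rw [Real.one_rpow]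
      have sub2 : (∑ j, (nL (ξ j) ^ p j + nL (ζ j) ^ p j)) ^ ((p i - 1) / p i)
          ≤ ∑ j, (nL (ξ j) ^ p j + nL (ζ j) ^ p j) ^ ((p i - 1) / p i) :=
        rpow_sum_subadd _ _ (fun j _ => add_nonneg (Real.rpow_nonneg (nL_nonneg' _) _)
          (Real.rpow_nonneg (nL_nonneg' _) _)) h0 hθ1
      have sub3 : ∑ j, (nL (ξ j) ^ p j + nL (ζ j) ^ p j) ^ ((p i - 1) / p i)
          ≤ ∑ j, (nL (ξ j) ^ (p j * (p i - 1) / p i) + nL (ζ j) ^ (p j * (p i - 1) / p i)) := by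
        apply Finset.sum_le_sum
        intro j _
        have e1 : nL (ξ j) ^ (p j * (p i - 1) / p i) = (nL (ξ j) ^ p j) ^ ((p i - 1) / p i) := by
          rw [← Real.rpow_mul (nL_nonneg' _), mul_div_assoc]
        have e2 : nL (ζ j) ^ (p j * (p i - 1) / p i) = (nL (ζ j) ^ p j) ^ ((p i - 1) / p i) := by
          rw [← Real.rpow_mul (nL_nonneg' _), mul_div_assoc]
        rw [e1, e2]
        exact rpow_subadd (Real.rpow_nonneg (nL_nonneg' _) _)
          (Real.rpow_nonneg (nL_nonneg' _) _) hθ0 hθ1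
      linarith
  have hK : 2 * M / r i ≤ 2 * a * (1 + 2 * B) *
      (1 + ∑ j, (nL (ξ j) ^ (p j * (p i - 1) / p i) + nL (ζ j) ^ (p j * (p i - 1) / p i))) := by
    have hRr : R / r i ≤
        1 + ∑ j, (nL (ξ j) ^ (p j * (p i - 1) / p i) + nL (ζ j) ^ (p j * (p i - 1) / p i)) :=
      hRdiv ▸ hRθ
    have e : 2 * M / r i = 2 * a * (1 + 2 * B) * (R / r i) := by
      rw [hMdef]; ring
    rw [e]
    exact mul_le_mul_of_nonneg_left hRr (by positivity)
  calc ∑ S : IdxSet n (k i + 1), 2 * M / r i * |ξ i S - ζ i S|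
      ≤ ∑ S : IdxSet n (k i + 1), 2 * M / r i * nL (ξ i - ζ i) :=
        Finset.sum_le_sum fun S _ => mul_le_mul_of_nonneg_left (hD S) hMr0
  _ = (Fintype.card (IdxSet n (k i + 1)) : ℝ) * (2 * M / r i * nL (ξ i - ζ i)) := by
      rw [Finset.sum_const, Finset.card_univ, nsmul_eq_mul]
  _ ≤ (Fintype.card (IdxSet n (k i + 1)) : ℝ) * (2 * a * (1 + 2 * B) *
        (1 + ∑ j, (nL (ξ j) ^ (p j * (p i - 1) / p i) + nL (ζ j) ^ (p j * (p i - 1) / p i))) *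
        nL (ξ i - ζ i)) := by
      apply mul_le_mul_of_nonneg_left _ (Nat.cast_nonneg _)
      exact mul_le_mul_of_nonneg_right hK hD0
  _ ≤ 2 * a * (1 + 2 * B) * ((Fintype.card (IdxSet n (k i + 1)) : ℝ) + 1) *
        (1 + ∑ j, (nL (ξ j) ^ (p j * (p i - 1) / p i) + nL (ζ j) ^ (p j * (p i - 1) / p i))) *
        nL (ξ i - ζ i) := by
      have hN0 : (0:ℝ) ≤ (Fintype.card (IdxSet n (k i + 1)) : ℝ) := Nat.cast_nonneg _
      nlinarith [mul_nonneg (mul_nonneg (by positivity : (0:ℝ) ≤ 2 * a * (1 + 2 * B))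
        (by linarith : (0:ℝ) ≤ 1 + ∑ j, (nL (ξ j) ^ (p j * (p i - 1) / p i)
          + nL (ζ j) ^ (p j * (p i - 1) / p i)))) hD0]
end
end
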